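/- arXiv:2110.10970 — 3 statements merged into one kernel-verified Lean document; each statement's English description precedes it below -/
import Mathlib

section
/- Completeness for formulae: for any fuzzy theory Λ on a language L and any formula φ, every model A of Λ satisfies φ (A ⊨ φ) if and only if ⊢_Λ φ. -/
universe u

/-- A signature: operation symbols with positive arities, and constant symbols. -/
structure Signature : Type (u + 1) where
  Op : Type u
  ar : Op → ℕ+
  Const : Type u

/-- Terms of the language `(S, X)`: inductively built from variables, constants and
operation applications. -/
inductive Term (S : Signature.{u}) (X : Type u) : Type u
  | var : X → Term S X
  | const : S.Const → Term S X
  | op (f : S.Op) : (Fin (S.ar f : ℕ) → Term S X) → Term S X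

/-- Formulae: equations `s ≡ t` and membership propositions `∃_l t`. -/
inductive Formula (H : Type u) (S : Signature.{u}) (X : Type u) : Type u
  | eq : Term S X → Term S X → Formula H S X
  | mem : H → Term S X → Formula H S X

/-- A sequent `Γ ⊢ φ`. -/
abbrev Sequent (H : Type u) (S : Signature.{u}) (X : Type u) : Type u :=
  Set (Formula H S X) × Formula H S X

/-- A fuzzy theory: a set of sequents. -/
abbrev Theory (H : Type u) (S : Signature.{u}) (X : Type u) : Type u :=
  Set (Sequent H S X)

/-- Substitution of terms for variables in a term. -/
def Term.subst {S : Signature.{u}} {X : Type u} (σ : X → Term S X) :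
    Term S X → Term S X
  | .var x => σ x
  | .const c => .const c
  | .op f ts => .op f fun i => (ts i).subst σ

/-- Substitution of terms for variables in a formula. -/
def Formula.subst {H : Type u} {S : Signature.{u}} {X : Type u} (σ : X → Term S X) :
    Formula H S X → Formula H S X
  | .eq s t => .eq (s.subst σ) (t.subst σ)
  | .mem l t => .mem l (t.subst σ)

/-- The fuzzy sequent calculus: `Deriv Λ Γ φ` means that the sequent `Γ ⊢ φ` belongs
to the deductive closure `Λ^⊢` of the theory `Λ`. -/
inductive Deriv {H : Type u} [Order.Frame H] {S : Signature.{u}} {X : Type u}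
    (Λ : Theory H S X) : Set (Formula H S X) → Formula H S X → Prop
  | ax {Γ φ} : (Γ, φ) ∈ Λ → Deriv Λ Γ φ
  | assum {Γ φ} : φ ∈ Γ → Deriv Λ Γ φ
  | weak {Γ Δ φ} : Deriv Λ Γ φ → Deriv Λ (Γ ∪ Δ) φ
  | cut {Γ Φ ψ} : (∀ φ ∈ Φ, Deriv Λ Γ φ) → Deriv Λ Φ ψ → Deriv Λ Γ ψ
  | refl {Γ t} : Deriv Λ Γ (.eq t t)
  | symm {Γ s t} : Deriv Λ Γ (.eq s t) → Deriv Λ Γ (.eq t s)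
  | trans {Γ s t u} : Deriv Λ Γ (.eq s t) → Deriv Λ Γ (.eq t u) → Deriv Λ Γ (.eq s u)
  | sub {Γ φ} (σ : X → Term S X) :
      Deriv Λ Γ φ → Deriv Λ (Formula.subst σ '' Γ) (φ.subst σ)
  | cong {Γ} (f : S.Op) (ts ss : Fin (S.ar f : ℕ) → Term S X) :
      (∀ i, Deriv Λ Γ (.eq (ts i) (ss i))) → Deriv Λ Γ (.eq (.op f ts) (.op f ss))
  | inf {Γ t} : Deriv Λ Γ (.mem ⊥ t)
  | mon {Γ l t} (l' : H) : Deriv Λ Γ (.mem l t) → Deriv Λ Γ (.mem (l ⊓ l') t)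
  | exp {Γ} (f : S.Op) (ts : Fin (S.ar f : ℕ) → Term S X) (ls : Fin (S.ar f : ℕ) → H) :
      (∀ i, Deriv Λ Γ (.mem (ls i) (ts i))) →
      Deriv Λ Γ (.mem (⨅ i, ls i) (.op f ts))
  | sup {Γ t} (L : Set H) :
      (∀ l ∈ L, Deriv Λ Γ (.mem l t)) → Deriv Λ Γ (.mem (sSup L) t)
  | fn {Γ l t s} : Deriv Λ Γ (.eq t s) → Deriv Λ Γ (.mem l t) → Deriv Λ Γ (.mem l s)

/-- The deductive closure `Λ^⊢` of a theory `Λ`. -/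
def deductiveClosure {H : Type u} [Order.Frame H] {S : Signature.{u}} {X : Type u}
    (Λ : Theory H S X) : Theory H S X :=
  { p | Deriv Λ p.1 p.2 }
/-- A Σ-fuzzy algebra: a fuzzy set with operations (compatible with membership
degrees) and constants. -/
structure FuzzyAlgebra (H : Type u) [Order.Frame H] (S : Signature.{u}) :
    Type (u + 1) where
  carrier : Type u
  μ : carrier → H
  ops (f : S.Op) : (Fin (S.ar f : ℕ) → carrier) → carrier
  le_ops : ∀ (f : S.Op) (as : Fin (S.ar f : ℕ) → carrier),
    (⨅ i, μ (as i)) ≤ μ (ops f as)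
  consts : S.Const → carrier

/-- Evaluation of a term in a Σ-fuzzy algebra under an assignment of the variables. -/
def FuzzyAlgebra.eval {H : Type u} [Order.Frame H] {S : Signature.{u}} {X : Type u}
    (A : FuzzyAlgebra H S) (ι : X → A.carrier) : Term S X → A.carrier
  | .var x => ι x
  | .const c => A.consts c
  | .op f ts => A.ops f fun i => A.eval ι (ts i)

/-- Satisfaction of a formula in a Σ-fuzzy algebra under an assignment. -/
def FuzzyAlgebra.Sat {H : Type u} [Order.Frame H] {S : Signature.{u}} {X : Type u}
    (A : FuzzyAlgebra H S) (ι : X → A.carrier) : Formula H S X → Prop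
  | .eq s t => A.eval ι s = A.eval ι t
  | .mem l t => l ≤ A.μ (A.eval ι t)

/-- Satisfaction of a sequent `Γ ⊢ φ` (with respect to all assignments). -/
def FuzzyAlgebra.SatSeq {H : Type u} [Order.Frame H] {S : Signature.{u}} {X : Type u}
    (A : FuzzyAlgebra H S) (Γ : Set (Formula H S X)) (φ : Formula H S X) : Prop :=
  ∀ ι : X → A.carrier, (∀ ψ ∈ Γ, A.Sat ι ψ) → A.Sat ι φ

/-- A model of a fuzzy theory: an algebra satisfying all its sequents. -/
def FuzzyAlgebra.IsModel {H : Type u} [Order.Frame H] {S : Signature.{u}} {X : Type u}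
    (A : FuzzyAlgebra H S) (Λ : Theory H S X) : Prop :=
  ∀ p ∈ Λ, A.SatSeq p.1 p.2

/-- A morphism of Σ-fuzzy algebras: a fuzzy-set morphism commuting with all
operations and constants. -/
structure FuzzyAlgHom {H : Type u} [Order.Frame H] {S : Signature.{u}}
    (A B : FuzzyAlgebra H S) : Type u where
  toFun : A.carrier → B.carrier
  le_mem : ∀ x, A.μ x ≤ B.μ (toFun x)
  map_ops : ∀ (f : S.Op) (as : Fin (S.ar f : ℕ) → A.carrier),
    toFun (A.ops f as) = B.ops f fun i => toFun (as i)
  map_consts : ∀ c, toFun (A.consts c) = B.consts c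
section Aux

variable {H : Type u} [Order.Frame H] {S : Signature.{u}} {X : Type u}

/-- Evaluation commutes with substitution. -/
theorem eval_subst (A : FuzzyAlgebra H S) (ι : X → A.carrier) (σ : X → Term S X) :
    ∀ t : Term S X, A.eval ι (t.subst σ) = A.eval (fun x => A.eval ι (σ x)) t
  | .var x => rfl
  | .const c => rfl
  | .op f ts => by
      simp only [Term.subst, FuzzyAlgebra.eval]
      exact congrArg _ (funext fun i => eval_subst A ι σ (ts i))

/-- Soundness of the fuzzy sequent calculus. -/
theorem soundness {Λ : Theory H S X} {Γ : Set (Formula H S X)} {φ : Formula H S X}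
    (h : Deriv Λ Γ φ) (A : FuzzyAlgebra H S) (hA : A.IsModel Λ) : A.SatSeq Γ φ := by
  induction h with
  | ax hmem => exact hA _ hmem
  | assum hmem => exact fun ι hΓ => hΓ _ hmem
  | weak _ ih => exact fun ι hΓ => ih ι fun ψ hψ => hΓ ψ (Set.mem_union_left _ hψ)
  | cut _ _ ih1 ih2 => exact fun ι hΓ => ih2 ι fun ψ hψ => ih1 ψ hψ ι hΓ
  | refl => exact fun ι _ => rfl
  | symm _ ih => exact fun ι hΓ => (ih ι hΓ).symm
  | trans _ _ ih1 ih2 => exact fun ι hΓ => (ih1 ι hΓ).trans (ih2 ι hΓ)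
  | sub σ _ ih =>
      intro ι hΓ
      have key : ∀ ψ : Formula H S X,
          A.Sat ι (ψ.subst σ) ↔ A.Sat (fun x => A.eval ι (σ x)) ψ := by
        intro ψ
        cases ψ with
        | eq s t => simp [FuzzyAlgebra.Sat, Formula.subst, eval_subst]
        | mem l t => simp [FuzzyAlgebra.Sat, Formula.subst, eval_subst]
      refine (key _).mpr (ih (fun x => A.eval ι (σ x)) ?_)
      intro ψ hψ
      exact (key ψ).mp (hΓ _ (Set.mem_image_of_mem _ hψ))
  | cong f ts ss _ ih =>
      intro ι hΓ
      show A.ops f _ = A.ops f _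
      exact congrArg _ (funext fun i => ih i ι hΓ)
  | inf => exact fun ι _ => bot_le
  | mon l' _ ih => exact fun ι hΓ => inf_le_left.trans (ih ι hΓ)
  | exp f ts ls _ ih =>
      intro ι hΓ
      refine le_trans (iInf_mono fun i => ih i ι hΓ) ?_
      exact A.le_ops f _
  | sup L _ ih => exact fun ι hΓ => sSup_le fun l hl => ih l hl ι hΓ
  | fn _ _ ih1 ih2 =>
      intro ι hΓ
      have := ih2 ι hΓ
      show _ ≤ A.μ (A.eval ι _)
      rw [← ih1 ι hΓ]
      exact this

variable (Λ : Theory H S X)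

/-- Provable equality, as a setoid on terms. -/
def derivSetoid : Setoid (Term S X) where
  r s t := Deriv Λ ∅ (.eq s t)
  iseqv := ⟨fun _ => Deriv.refl, Deriv.symm, Deriv.trans⟩

/-- Carrier of the term model. -/
def TM : Type u := Quotient (derivSetoid Λ)

def TM.mk (t : Term S X) : TM Λ := Quotient.mk (derivSetoid Λ) t

theorem TM.mk_eq {s t : Term S X} :
    TM.mk Λ s = TM.mk Λ t ↔ Deriv Λ ∅ (.eq s t) := by
  unfold TM.mk
  exact ⟨Quotient.exact, fun h => Quotient.sound h⟩

theorem TM.out_spec (q : TM Λ) : TM.mk Λ q.out = q := Quotient.out_eq q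

theorem TM.mk_out (t : Term S X) : Deriv Λ ∅ (.eq (TM.mk Λ t).out t) :=
  (TM.mk_eq Λ).mp (TM.out_spec Λ _)

/-- Membership degree in the term model. -/
def TM.mu : TM Λ → H :=
  Quotient.lift (fun t => sSup {l | Deriv Λ ∅ (.mem l t)}) <| by
    intro s t hst
    refine congrArg sSup (Set.ext fun l => ⟨fun h => ?_, fun h => ?_⟩)
    · exact Deriv.fn hst h
    · exact Deriv.fn (Deriv.symm hst) h

theorem TM.mu_mk (t : Term S X) :
    TM.mu Λ (TM.mk Λ t) = sSup {l | Deriv Λ ∅ (.mem l t)} := rfl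

theorem TM.deriv_mu (t : Term S X) :
    Deriv Λ ∅ (.mem (TM.mu Λ (TM.mk Λ t)) t) := by
  rw [TM.mu_mk]
  exact Deriv.sup _ fun l hl => hl

theorem TM.le_mu_iff (l : H) (t : Term S X) :
    l ≤ TM.mu Λ (TM.mk Λ t) ↔ Deriv Λ ∅ (.mem l t) := by
  constructor
  · intro h
    have := Deriv.mon (Λ := Λ) (Γ := ∅) (t := t) l (TM.deriv_mu Λ t)
    rwa [inf_eq_right.mpr h] at this
  · intro h
    exact le_sSup h

/-- The term model. -/
noncomputable def termModel : FuzzyAlgebra H S where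
  carrier := TM Λ
  μ := TM.mu Λ
  ops f as := TM.mk Λ (.op f fun i => (as i).out)
  le_ops f as := by
    rw [show (⨅ i, TM.mu Λ (as i)) = ⨅ i, TM.mu Λ (TM.mk Λ (as i).out) by
      exact congrArg _ (funext fun i => by rw [TM.out_spec])]
    refine (TM.le_mu_iff Λ _ _).mpr ?_
    exact Deriv.exp f _ _ fun i => (TM.le_mu_iff Λ _ _).mp le_rfl
  consts c := TM.mk Λ (.const c)

theorem termModel_eval (σ : X → Term S X) :
    ∀ t : Term S X,
      (termModel Λ).eval (fun x => TM.mk Λ (σ x)) t = TM.mk Λ (t.subst σ)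
  | .var x => rfl
  | .const c => rfl
  | .op f ts => by
      simp only [FuzzyAlgebra.eval, Term.subst]
      show TM.mk Λ (.op f _) = TM.mk Λ (.op f _)
      refine (TM.mk_eq Λ).mpr (Deriv.cong f _ _ fun i => ?_)
      show Deriv Λ ∅
        (.eq ((termModel Λ).eval (fun x => TM.mk Λ (σ x)) (ts i)).out ((ts i).subst σ))
      rw [termModel_eval σ (ts i)]
      exact TM.mk_out Λ _

theorem termModel_sat_iff (σ : X → Term S X) (ψ : Formula H S X) :
    (termModel Λ).Sat (fun x => TM.mk Λ (σ x)) ψ ↔ Deriv Λ ∅ (ψ.subst σ) := by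
  cases ψ with
  | eq s t =>
      show _ = _ ↔ _
      rw [termModel_eval, termModel_eval]
      exact TM.mk_eq Λ
  | mem l t =>
      show l ≤ (termModel Λ).μ _ ↔ _
      rw [termModel_eval]
      exact TM.le_mu_iff Λ l _

theorem termModel_isModel : (termModel Λ).IsModel Λ := by
  rintro ⟨Γ, ψ⟩ hmem ι hΓ
  set σ : X → Term S X := fun x => (ι x).out with hσ
  have hι : ι = fun x => TM.mk Λ (σ x) := funext fun x => (TM.out_spec Λ (ι x)).symm
  rw [hι] at hΓ ⊢
  rw [termModel_sat_iff]
  refine Deriv.cut (Φ := Formula.subst σ '' Γ) ?_ (Deriv.sub σ (Deriv.ax hmem))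
  rintro _ ⟨χ, hχ, rfl⟩
  exact (termModel_sat_iff Λ σ χ).mp (hΓ χ hχ)

theorem subst_var : ∀ t : Term S X, t.subst .var = t
  | .var x => rfl
  | .const c => rfl
  | .op f ts => by
      simp only [Term.subst]
      exact congrArg _ (funext fun i => subst_var (ts i))

end Aux

/-- Completeness for formulae: a formula is satisfied by all models of a theory `Λ`
iff it is derivable from `Λ`. -/
theorem completeness_for_formulae {H : Type u} [Order.Frame H] {S : Signature.{u}}
    {X : Type u} (Λ : Theory H S X) (φ : Formula H S X) :
    (∀ A : FuzzyAlgebra H S, A.IsModel Λ → ∀ ι : X → A.carrier, A.Sat ι φ) ↔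
      Deriv Λ ∅ φ := by
  constructor
  · intro h
    have := h (termModel Λ) (termModel_isModel Λ)
      (fun x => TM.mk Λ (Term.var x))
    have := (termModel_sat_iff Λ Term.var φ).mp this
    cases φ with
    | eq s t => simpa [Formula.subst, subst_var] using this
    | mem l t => simpa [Formula.subst, subst_var] using this
  · intro h A hA ι
    exact soundness h A hA ι (fun ψ hψ => absurd hψ (Set.notMem_empty ψ))
end

section
/- For any signature Σ, the class E_Σ of Σ-algebra morphisms whose underlying fuzzy-set map is an epimorphism (i.e. surjective) and the class M_Σ of Σ-algebra morphisms whose underlying fuzzy-set map is a strong monomorphism (i.e. injective and membership-preserving) form a proper factorization system on the category Alg(Σ) of Σ-fuzzy algebras. -/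
universe u

/-- Identity morphism of Σ-fuzzy algebras. -/
def FuzzyAlgHom.id {H : Type u} [Order.Frame H] {S : Signature.{u}}
    (A : FuzzyAlgebra H S) : FuzzyAlgHom A A :=
  ⟨_root_.id, fun _ => le_rfl, fun _ _ => rfl, fun _ => rfl⟩

/-- Composition of morphisms of Σ-fuzzy algebras. -/
def FuzzyAlgHom.comp {H : Type u} [Order.Frame H] {S : Signature.{u}}
    {A B C : FuzzyAlgebra H S} (f : FuzzyAlgHom A B) (g : FuzzyAlgHom B C) :
    FuzzyAlgHom A C where
  toFun := g.toFun ∘ f.toFun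
  le_mem x := (f.le_mem x).trans (g.le_mem _)
  map_ops h as := by simp [Function.comp, f.map_ops, g.map_ops]
  map_consts c := by simp [Function.comp, f.map_consts, g.map_consts]

/-- The category `Alg(Σ)` of Σ-fuzzy algebras. -/
instance algCat {H : Type u} [Order.Frame H] {S : Signature.{u}} :
    CategoryTheory.Category.{u} (FuzzyAlgebra H S) where
  Hom A B := FuzzyAlgHom A B
  id A := FuzzyAlgHom.id A
  comp f g := f.comp g
  id_comp _ := rfl
  comp_id _ := rfl
  assoc _ _ _ := rfl

/-- The forgetful functor `V_Σ : Alg(Σ) → Set`. -/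
def forgetAlg (H : Type u) [Order.Frame H] (S : Signature.{u}) :
    CategoryTheory.Functor (FuzzyAlgebra H S) (Type u) where
  obj A := A.carrier
  map f := TypeCat.ofHom (FuzzyAlgHom.toFun f)
  map_id _ := rfl
  map_comp _ _ := rfl

/-- The term algebra on a set `X`: terms with membership constantly `⊥` and
syntactic operations and constants. -/
def termAlgebra (H : Type u) [Order.Frame H] (S : Signature.{u}) (X : Type u) :
    FuzzyAlgebra H S where
  carrier := Term S X
  μ := fun _ => ⊥
  ops f ts := Term.op f ts
  le_ops f as := iInf_le (fun _ => (⊥ : H)) ⟨0, (S.ar f).pos⟩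
  consts := Term.const

open CategoryTheory

/-- An arrow `m` has the (unique) left lifting property with respect to an arrow `e`. -/
def LLP {C : Type*} [Category C] {A B X Y : C} (e : A ⟶ B) (m : X ⟶ Y) : Prop :=
  ∀ (u : A ⟶ X) (v : B ⟶ Y), u ≫ m = e ≫ v → ∃! k : B ⟶ X, k ≫ m = v

/-- A proper factorization system `(E, M)` on a category. -/
structure IsProperFactorizationSystem (C : Type*) [Category C]
    (E M : MorphismProperty C) : Prop where
  comp_E : ∀ {X Y Z : C} (f : X ⟶ Y) (g : Y ⟶ Z), E f → E g → E (f ≫ g)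
  comp_M : ∀ {X Y Z : C} (f : X ⟶ Y) (g : Y ⟶ Z), M f → M g → M (f ≫ g)
  iso_E : ∀ {X Y : C} (f : X ⟶ Y), IsIso f → E f
  iso_M : ∀ {X Y : C} (f : X ⟶ Y), IsIso f → M f
  epi_of_E : ∀ {X Y : C} (f : X ⟶ Y), E f → Epi f
  mono_of_M : ∀ {X Y : C} (f : X ⟶ Y), M f → Mono f
  llp : ∀ {A B X Y : C} (e : A ⟶ B) (m : X ⟶ Y), E e → M m → LLP e m
  factor : ∀ {X Y : C} (f : X ⟶ Y), ∃ (Z : C) (e : X ⟶ Z) (m : Z ⟶ Y),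
    E e ∧ M m ∧ e ≫ m = f

theorem FuzzyAlgHom.ext' {H : Type u} [Order.Frame H] {S : Signature.{u}}
    {A B : FuzzyAlgebra H S} {f g : FuzzyAlgHom A B}
    (h : f.toFun = g.toFun) : f = g := by
  cases f; cases g; simp_all

theorem algCat_comp_toFun {H : Type u} [Order.Frame H] {S : Signature.{u}}
    {A B C : FuzzyAlgebra H S} (f : A ⟶ B) (g : B ⟶ C) :
    FuzzyAlgHom.toFun (f ≫ g) = g.toFun ∘ f.toFun := rfl

/-- For any signature `Σ`, the Σ-algebra morphisms whose underlying map of fuzzy sets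
is an epimorphism (i.e. surjective) and those whose underlying map is a strong
monomorphism (i.e. injective and membership-preserving) form a proper factorization
system on `Alg(Σ)`. -/
theorem alg_proper_factorization_system (H : Type u) [Order.Frame H]
    (S : Signature.{u}) :
    IsProperFactorizationSystem (FuzzyAlgebra H S)
      (fun _ _ f => Function.Surjective (FuzzyAlgHom.toFun f))
      (fun A B m => Function.Injective (FuzzyAlgHom.toFun m) ∧
        ∀ x, B.μ (FuzzyAlgHom.toFun m x) = A.μ x) := by
  constructor
  · -- comp_E
    intro X Y Z f g hf hg
    exact hg.comp hf
  · -- comp_M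
    intro X Y Z f g hf hg
    exact ⟨hg.1.comp hf.1, fun x => (hg.2 _).trans (hf.2 x)⟩
  · -- iso_E
    intro X Y f hf
    intro y
    exact ⟨(inv f).toFun y, congrFun (congrArg FuzzyAlgHom.toFun (IsIso.inv_hom_id f)) y⟩
  · -- iso_M
    intro X Y f hf
    constructor
    · intro a b hab
      have := congrArg (inv f).toFun hab
      have h1 := congrFun (congrArg FuzzyAlgHom.toFun (IsIso.hom_inv_id f))
      exact (h1 a).symm.trans (this.trans (h1 b))
    · intro x
      refine le_antisymm ?_ (f.le_mem x)
      have h1 := congrFun (congrArg FuzzyAlgHom.toFun (IsIso.hom_inv_id f)) x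
      have := (inv f).le_mem (f.toFun x)
      rwa [show (inv f).toFun (f.toFun x) = x from h1] at this
  · -- epi_of_E
    intro X Y f hf
    constructor
    intro Z g h hgh
    apply FuzzyAlgHom.ext'
    funext y
    obtain ⟨x, rfl⟩ := hf y
    exact congrFun (congrArg FuzzyAlgHom.toFun hgh) x
  · -- mono_of_M
    intro X Y f hf
    constructor
    intro Z g h hgh
    apply FuzzyAlgHom.ext'
    funext z
    exact hf.1 (congrFun (congrArg FuzzyAlgHom.toFun hgh) z)
  · -- llp
    intro A B X Y e m he hm u v huv
    have hmv : ∀ a : A.carrier, m.toFun (u.toFun a) = v.toFun (e.toFun a) :=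
      fun a => congrFun (congrArg FuzzyAlgHom.toFun huv) a
    have key : ∀ b : B.carrier, ∃ x : X.carrier, m.toFun x = v.toFun b := by
      intro b
      obtain ⟨a, rfl⟩ := he b
      exact ⟨u.toFun a, hmv a⟩
    choose k hk using key
    refine ⟨⟨k, ?_, ?_, ?_⟩, ?_, ?_⟩
    · intro b
      have : X.μ (k b) = Y.μ (m.toFun (k b)) := (hm.2 _).symm
      rw [this, hk b]
      exact v.le_mem b
    · intro f bs
      apply hm.1
      rw [hk, m.map_ops, v.map_ops]
      congr 1
      funext i
      exact (hk (bs i)).symm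
    · intro c
      apply hm.1
      rw [hk, m.map_consts, v.map_consts]
    · exact FuzzyAlgHom.ext' (funext fun b => hk b)
    · intro k' hk'
      apply FuzzyAlgHom.ext'
      funext b
      apply hm.1
      rw [hk b]
      exact congrFun (congrArg FuzzyAlgHom.toFun hk') b
  · -- factor
    intro A B f
    have hrange : ∀ (g : S.Op) (zs : Fin (S.ar g : ℕ) → {b : B.carrier // b ∈ Set.range f.toFun}),
        B.ops g (fun i => (zs i).1) ∈ Set.range f.toFun := by
      intro g zs
      choose as has using fun i => (zs i).2
      refine ⟨A.ops g as, ?_⟩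
      rw [f.map_ops]
      congr 1
      funext i
      exact has i
    refine ⟨⟨{b : B.carrier // b ∈ Set.range f.toFun}, fun z => B.μ z.1,
      fun g zs => ⟨B.ops g (fun i => (zs i).1), hrange g zs⟩,
      fun g zs => B.le_ops g _,
      fun c => ⟨B.consts c, A.consts c, f.map_consts c⟩⟩,
      ⟨fun a => ⟨f.toFun a, a, rfl⟩, fun a => f.le_mem a,
        fun g as => Subtype.ext (f.map_ops g as), fun c => Subtype.ext (f.map_consts c)⟩,
      ⟨Subtype.val, fun z => le_rfl, fun g zs => rfl, fun c => rfl⟩,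
      ?_, ⟨Subtype.val_injective, fun z => rfl⟩, ?_⟩
    · rintro ⟨b, a, rfl⟩
      exact ⟨a, rfl⟩
    · exact FuzzyAlgHom.ext' rfl
end

section
/- HSP-type theorem: let V be a full subcategory of Alg(Σ). Then (1) V is closed under epimorphic images, small products and strong subalgebras (subobjects along strong monomorphisms) if and only if there exists a class {Λ_e}_{e∈E} of unconditional fuzzy theories such that A ∈ V iff A is a model of Λ_e for all e ∈ E; and (2) V is closed under split epimorphic images, small products and strong subalgebras if and only if there exists a class {Λ_e}_{e∈E} of type-E fuzzy theories such that A ∈ V iff A is a model of Λ_e for all e ∈ E. -/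
universe u

/-- The product of a family of Σ-fuzzy algebras: the cartesian product of the
carriers, with infimum membership and pointwise operations. -/
def prodAlg {H : Type u} [Order.Frame H] {S : Signature.{u}} {I : Type u}
    (A : I → FuzzyAlgebra H S) : FuzzyAlgebra H S where
  carrier := ∀ i, (A i).carrier
  μ a := ⨅ i, (A i).μ (a i)
  ops f as i := (A i).ops f fun j => as j i
  le_ops f as := le_iInf fun i =>
    le_trans (iInf_mono fun j => iInf_le (fun i' => (A i').μ (as j i')) i)
      ((A i).le_ops f fun j => as j i)
  consts c i := (A i).consts c

/-- A class of Σ-fuzzy algebras is closed under epimorphic images. -/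
def ClosedUnderEpi {H : Type u} [Order.Frame H] {S : Signature.{u}}
    (V : FuzzyAlgebra H S → Prop) : Prop :=
  ∀ (A B : FuzzyAlgebra H S) (h : FuzzyAlgHom A B),
    Function.Surjective h.toFun → V A → V B

/-- A class of Σ-fuzzy algebras is closed under split epimorphic images (images along
morphisms whose underlying map is split in `Fuz(H)`). -/
def ClosedUnderSplitEpi {H : Type u} [Order.Frame H] {S : Signature.{u}}
    (V : FuzzyAlgebra H S → Prop) : Prop :=
  ∀ (A B : FuzzyAlgebra H S) (h : FuzzyAlgHom A B),
    (∃ s : B.carrier → A.carrier,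
      (∀ b, B.μ b ≤ A.μ (s b)) ∧ ∀ b, h.toFun (s b) = b) →
    V A → V B

/-- A class of Σ-fuzzy algebras is closed under small products. -/
def ClosedUnderProd {H : Type u} [Order.Frame H] {S : Signature.{u}}
    (V : FuzzyAlgebra H S → Prop) : Prop :=
  ∀ (I : Type u) (A : I → FuzzyAlgebra H S), (∀ i, V (A i)) → V (prodAlg A)

/-- A class of Σ-fuzzy algebras is closed under strong subalgebras (subobjects along
morphisms whose underlying map is a strong monomorphism). -/
def ClosedUnderStrongSub {H : Type u} [Order.Frame H] {S : Signature.{u}}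
    (V : FuzzyAlgebra H S → Prop) : Prop :=
  ∀ (A B : FuzzyAlgebra H S) (h : FuzzyAlgHom A B),
    Function.Injective h.toFun → (∀ x, B.μ (h.toFun x) = A.μ x) → V B → V A

/-- An unconditional theory: every sequent has empty premise. -/
def Theory.Unconditional {H : Type u} [Order.Frame H] {S : Signature.{u}} {X : Type u}
    (Λ : Theory H S X) : Prop :=
  ∀ p ∈ Λ, p.1 = (∅ : Set (Formula H S X))

/-- A theory of type `E`: every premise of every sequent is a membership
proposition `∃_l x` with `x` a variable. -/
def Theory.TypeE {H : Type u} [Order.Frame H] {S : Signature.{u}} {X : Type u}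
    (Λ : Theory H S X) : Prop :=
  ∀ p ∈ Λ, ∀ φ ∈ p.1, ∃ (l : H) (x : X), φ = Formula.mem l (Term.var x)

section HSPAux

variable {H : Type u} [Order.Frame H] {S : Signature.{u}}

lemma FuzzyAlgebra.eval_op (A : FuzzyAlgebra H S) {X : Type u} (ι : X → A.carrier)
    (f : S.Op) (ts : Fin (S.ar f : ℕ) → Term S X) :
    A.eval ι (.op f ts) = A.ops f fun i => A.eval ι (ts i) := rfl

lemma sat_eq_iff (A : FuzzyAlgebra H S) {X : Type u} (ι : X → A.carrier)
    (s t : Term S X) : A.Sat ι (.eq s t) ↔ A.eval ι s = A.eval ι t := Iff.rfl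

lemma sat_mem_iff (A : FuzzyAlgebra H S) {X : Type u} (ι : X → A.carrier)
    (l : H) (t : Term S X) : A.Sat ι (.mem l t) ↔ l ≤ A.μ (A.eval ι t) := Iff.rfl

lemma eval_hom {A B : FuzzyAlgebra H S} (h : FuzzyAlgHom A B) {X : Type u}
    (ι : X → A.carrier) (t : Term S X) :
    h.toFun (A.eval ι t) = B.eval (fun x => h.toFun (ι x)) t := by
  induction t with
  | var x => rfl
  | const k => exact h.map_consts k
  | op f ts ih =>
    rw [FuzzyAlgebra.eval_op, FuzzyAlgebra.eval_op, h.map_ops]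
    exact congrArg _ (funext ih)

lemma prod_eval {I : Type u} (Al : I → FuzzyAlgebra H S) {X : Type u}
    (ι : X → (prodAlg Al).carrier) (t : Term S X) (i : I) :
    (prodAlg Al).eval ι t i = (Al i).eval (fun x => ι x i) t := by
  induction t with
  | var x => rfl
  | const k => rfl
  | op f ts ih =>
    rw [FuzzyAlgebra.eval_op, FuzzyAlgebra.eval_op]
    exact congrArg _ (funext ih)

section Free

variable (V : FuzzyAlgebra H S → Prop) {X : Type u} (c : X → H)

/-- Assignments with membership degrees at least `c` into members of `V`. -/
def GoodAssign (B : FuzzyAlgebra H S) (ι : X → B.carrier) : Prop :=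
  V B ∧ ∀ x, c x ≤ B.μ (ι x)

/-- Two terms are related iff they have equal values under all good assignments. -/
def tsetoid : Setoid (Term S X) where
  r s t := ∀ B ι, GoodAssign V c B ι → B.eval ι s = B.eval ι t
  iseqv := ⟨fun _ _ _ _ => rfl, fun h B ι g => (h B ι g).symm,
    fun h1 h2 B ι g => (h1 B ι g).trans (h2 B ι g)⟩

/-- Membership degree for the free algebra. -/
def mdeg (t : Term S X) : H :=
  sInf { h | ∃ B ι, GoodAssign V c B ι ∧ h = B.μ (B.eval ι t) }

lemma mdeg_le {t : Term S X} {B ι} (g : GoodAssign V c B ι) :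
    mdeg V c t ≤ B.μ (B.eval ι t) := sInf_le ⟨B, ι, g, rfl⟩

lemma mdeg_congr {s t : Term S X} (h : (tsetoid V c).r s t) :
    mdeg V c s = mdeg V c t := by
  unfold mdeg; congr 1; ext h'; constructor
  · rintro ⟨B, ι, g, rfl⟩; exact ⟨B, ι, g, by rw [h B ι g]⟩
  · rintro ⟨B, ι, g, rfl⟩; exact ⟨B, ι, g, by rw [h B ι g]⟩

lemma mdeg_op (f : S.Op) (ts : Fin (S.ar f : ℕ) → Term S X) :
    (⨅ i, mdeg V c (ts i)) ≤ mdeg V c (.op f ts) := by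
  refine le_sInf ?_
  rintro h ⟨B, ι, g, rfl⟩
  refine le_trans (iInf_mono fun i => mdeg_le V c g) ?_
  rw [FuzzyAlgebra.eval_op]
  exact B.le_ops f _

/-- The (size-bounded) free algebra of `V` over `(X, c)`. -/
noncomputable def FreeAlg : FuzzyAlgebra H S where
  carrier := Quotient (tsetoid V c)
  μ := Quotient.lift (mdeg V c) fun _ _ h => mdeg_congr V c h
  ops f as := Quotient.mk _ (.op f fun i => (as i).out)
  le_ops f as := by
    have h1 : ∀ i, Quotient.lift (mdeg V c) (fun _ _ h => mdeg_congr V c h) (as i)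
        = mdeg V c (as i).out := fun i =>
      congrArg (Quotient.lift (mdeg V c) (fun _ _ h => mdeg_congr V c h))
        ((Quotient.out_eq (as i)).symm)
    show _ ≤ mdeg V c (.op f fun i => (as i).out)
    simp only [h1]
    exact mdeg_op V c f _
  consts k := Quotient.mk _ (.const k)

lemma freeAlg_mu_mk (t : Term S X) :
    (FreeAlg V c).μ (Quotient.mk _ t) = mdeg V c t := rfl

lemma freeAlg_ops_mk (f : S.Op) (ts : Fin (S.ar f : ℕ) → Term S X) :
    (FreeAlg V c).ops f (fun i => Quotient.mk _ (ts i)) = Quotient.mk _ (.op f ts) := by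
  refine Quotient.sound fun B ι g => ?_
  rw [FuzzyAlgebra.eval_op, FuzzyAlgebra.eval_op]
  refine congrArg _ (funext fun i => ?_)
  exact (Quotient.exact (Quotient.out_eq (Quotient.mk (tsetoid V c) (ts i))) :
    (tsetoid V c).r _ _) B ι g

end Free

theorem hsp_key (V : FuzzyAlgebra H S → Prop)
    (hprod : ClosedUnderProd V) (hsub : ClosedUnderStrongSub V)
    (A : FuzzyAlgebra H S) (c : A.carrier → H)
    (hsat : ∀ φ : Formula H S A.carrier,
      (∀ B ι, GoodAssign V c B ι → B.Sat ι φ) → A.Sat id φ) :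
    ∃ (F : FuzzyAlgebra H S) (ev : FuzzyAlgHom F A) (sec : A.carrier → F.carrier),
      V F ∧ (∀ a, ev.toFun (sec a) = a) ∧ (∀ a, c a ≤ F.μ (sec a)) ∧
      Function.Surjective ev.toFun := by
  classical
  -- the evaluation morphism
  have evwd : ∀ s t : Term S A.carrier, (tsetoid V c).r s t → A.eval id s = A.eval id t :=
    fun s t h => hsat (.eq s t) (fun B ι g => h B ι g)
  let ev : FuzzyAlgHom (FreeAlg V c) A :=
    { toFun := Quotient.lift (fun t => A.eval id t) evwd
      le_mem := fun x => Quotient.inductionOn x fun t =>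
        hsat (.mem (mdeg V c t) t) (fun B ι g => mdeg_le V c g)
      map_ops := fun f as => by
        have has : as = fun i => Quotient.mk (tsetoid V c) (as i).out :=
          funext fun i => (Quotient.out_eq (as i)).symm
        rw [has, freeAlg_ops_mk]
        rfl
      map_consts := fun k => rfl }
  -- the section
  let sec : A.carrier → (FreeAlg V c).carrier := fun a => Quotient.mk _ (.var a)
  have hsec : ∀ a, ev.toFun (sec a) = a := fun a => rfl
  have hsecμ : ∀ a, c a ≤ (FreeAlg V c).μ (sec a) := by
    intro a
    refine le_sInf ?_
    rintro h ⟨B, ι, g, rfl⟩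
    exact g.2 a
  have hsurj : Function.Surjective ev.toFun := fun a => ⟨sec a, rfl⟩
  -- `FreeAlg V c` belongs to `V`: it is a strong subalgebra of a set-indexed product
  let D : Type u := {d : (Term S A.carrier → Term S A.carrier → Prop) ×
      (Term S A.carrier → H) //
    ∃ B ι, GoodAssign V c B ι ∧ (∀ s t, d.1 s t ↔ B.eval ι s = B.eval ι t) ∧
      ∀ t, d.2 t = B.μ (B.eval ι t)}
  choose Bd ιd hGood hrel hdeg using fun d : D => d.2
  -- canonical index associated to a good assignment
  let idx : ∀ (B : FuzzyAlgebra H S) (ι : A.carrier → B.carrier),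
      GoodAssign V c B ι → D :=
    fun B ι g => ⟨⟨fun s t => B.eval ι s = B.eval ι t, fun t => B.μ (B.eval ι t)⟩,
      ⟨B, ι, g, fun _ _ => Iff.rfl, fun _ => rfl⟩⟩
  have hVP : V (prodAlg Bd) := hprod D Bd fun d => (hGood d).1
  have ewd : ∀ s t : Term S A.carrier, (tsetoid V c).r s t →
      (fun d : D => (Bd d).eval (ιd d) s) = fun d => (Bd d).eval (ιd d) t :=
    fun s t h => funext fun d => h (Bd d) (ιd d) (hGood d)
  have hμeq : ∀ t : Term S A.carrier,
      (⨅ d : D, (Bd d).μ ((Bd d).eval (ιd d) t)) = mdeg V c t := by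
    intro t
    refine le_antisymm (le_sInf ?_) (le_iInf fun d => mdeg_le V c (hGood d))
    rintro h ⟨B, ι, g, rfl⟩
    refine le_trans (iInf_le _ (idx B ι g)) ?_
    exact le_of_eq (hdeg (idx B ι g) t).symm
  let e : FuzzyAlgHom (FreeAlg V c) (prodAlg Bd) :=
    { toFun := Quotient.lift (fun t => fun d : D => (Bd d).eval (ιd d) t) ewd
      le_mem := fun x => Quotient.inductionOn x fun t => le_of_eq (hμeq t).symm
      map_ops := fun f as => by
        have has : as = fun i => Quotient.mk (tsetoid V c) (as i).out :=
          funext fun i => (Quotient.out_eq (as i)).symm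
        rw [has, freeAlg_ops_mk]
        rfl
      map_consts := fun k => rfl }
  have heμ : ∀ x, (prodAlg Bd).μ (e.toFun x) = (FreeAlg V c).μ x :=
    fun x => Quotient.inductionOn x fun t => hμeq t
  have hinj : Function.Injective e.toFun := by
    refine fun x y => Quotient.inductionOn₂ x y fun s t hh => ?_
    refine Quotient.sound fun B ι g => ?_
    exact (hrel (idx B ι g) s t).mpr (congrFun hh (idx B ι g))
  exact ⟨FreeAlg V c, ev, sec, hsub (FreeAlg V c) (prodAlg Bd) e hinj heμ hVP,
    hsec, hsecμ, hsurj⟩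

lemma isModel_of_strongMono {A B : FuzzyAlgebra H S} (h : FuzzyAlgHom A B)
    (inj : Function.Injective h.toFun) (hμ : ∀ x, B.μ (h.toFun x) = A.μ x)
    {X : Type u} (Λ : Theory H S X) (hB : B.IsModel Λ) : A.IsModel Λ := by
  intro p hp ι hΓ
  have hc := hB p hp (fun x => h.toFun (ι x)) ?_
  · rcases p with ⟨Γ, φ⟩
    cases φ with
    | eq s t =>
      refine inj ?_
      rw [eval_hom, eval_hom]
      exact hc
    | mem l t =>
      have : l ≤ B.μ (B.eval (fun x => h.toFun (ι x)) t) := hc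
      rw [← eval_hom, hμ] at this
      exact this
  · intro ψ hψ
    have hs := hΓ ψ hψ
    cases ψ with
    | eq s t =>
      show B.eval _ s = B.eval _ t
      rw [← eval_hom, ← eval_hom]
      exact congrArg h.toFun hs
    | mem l t =>
      show l ≤ B.μ (B.eval _ t)
      rw [← eval_hom, hμ]
      exact hs

lemma typeE_of_unconditional {X : Type u} {Λ : Theory H S X}
    (hU : Λ.Unconditional) : Λ.TypeE := by
  intro p hp ψ hψ
  rw [hU p hp] at hψ
  exact absurd hψ (Set.notMem_empty ψ)

lemma isModel_prod_typeE {I : Type u} (Al : I → FuzzyAlgebra H S) {X : Type u}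
    (Λ : Theory H S X) (hE : Λ.TypeE) (h : ∀ i, (Al i).IsModel Λ) :
    (prodAlg Al).IsModel Λ := by
  intro p hp ι hΓ
  have hcomp : ∀ i, (Al i).Sat (fun x => ι x i) p.2 := by
    intro i
    refine h i p hp _ fun ψ hψ => ?_
    obtain ⟨l, x, rfl⟩ := hE p hp ψ hψ
    have hs : l ≤ ⨅ j, (Al j).μ (ι x j) := hΓ _ hψ
    exact le_trans hs (iInf_le _ i)
  rcases p with ⟨Γ, φ⟩
  cases φ with
  | eq s t =>
    show (prodAlg Al).eval ι s = (prodAlg Al).eval ι t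
    funext i
    rw [prod_eval, prod_eval]
    exact hcomp i
  | mem l t =>
    show l ≤ ⨅ i, (Al i).μ ((prodAlg Al).eval ι t i)
    refine le_iInf fun i => ?_
    rw [prod_eval]
    exact hcomp i

lemma isModel_epi {A B : FuzzyAlgebra H S} (h : FuzzyAlgHom A B)
    (hs : Function.Surjective h.toFun) {X : Type u} (Λ : Theory H S X)
    (hU : Λ.Unconditional) (hA : A.IsModel Λ) : B.IsModel Λ := by
  intro p hp κ hΓ
  have hc := hA p hp (fun x => Function.surjInv hs (κ x)) ?_
  · have hκ : (fun x => h.toFun (Function.surjInv hs (κ x))) = κ :=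
      funext fun x => Function.surjInv_eq hs (κ x)
    rcases p with ⟨Γ, φ⟩
    cases φ with
    | eq s t =>
      show B.eval κ s = B.eval κ t
      rw [← hκ, ← eval_hom, ← eval_hom]
      exact congrArg h.toFun hc
    | mem l t =>
      show l ≤ B.μ (B.eval κ t)
      rw [← hκ, ← eval_hom]
      exact le_trans hc (h.le_mem _)
  · intro ψ hψ
    rw [hU p hp] at hψ
    exact absurd hψ (Set.notMem_empty ψ)

lemma isModel_splitEpi {A B : FuzzyAlgebra H S} (h : FuzzyAlgHom A B)
    (sec : B.carrier → A.carrier) (hμ : ∀ b, B.μ b ≤ A.μ (sec b))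
    (hsec : ∀ b, h.toFun (sec b) = b) {X : Type u} (Λ : Theory H S X)
    (hE : Λ.TypeE) (hA : A.IsModel Λ) : B.IsModel Λ := by
  intro p hp κ hΓ
  have hc := hA p hp (fun x => sec (κ x)) ?_
  · have hκ : (fun x => h.toFun (sec (κ x))) = κ := funext fun x => hsec (κ x)
    rcases p with ⟨Γ, φ⟩
    cases φ with
    | eq s t =>
      show B.eval κ s = B.eval κ t
      rw [← hκ, ← eval_hom, ← eval_hom]
      exact congrArg h.toFun hc
    | mem l t =>
      show l ≤ B.μ (B.eval κ t)
      rw [← hκ, ← eval_hom]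
      exact le_trans hc (h.le_mem _)
  · intro ψ hψ
    obtain ⟨l, x, rfl⟩ := hE p hp ψ hψ
    have hs : l ≤ B.μ (κ x) := hΓ _ hψ
    exact le_trans hs (hμ _)

end HSPAux

/-- HSP-type theorem: a class `V` of Σ-fuzzy algebras is closed under epimorphic
images, small products and strong subalgebras iff it is the class of common models of
a class of unconditional theories; it is closed under split epimorphic images, small
products and strong subalgebras iff it is the class of common models of a class of
theories of type `E`. -/
theorem hsp_theorems {H : Type u} [Order.Frame H] {S : Signature.{u}}
    (V : FuzzyAlgebra H S → Prop) :
    ((ClosedUnderEpi V ∧ ClosedUnderProd V ∧ ClosedUnderStrongSub V) ↔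
      ∃ (ι : Type (u + 1)) (Xe : ι → Type u) (Λ : ∀ e : ι, Theory H S (Xe e)),
        (∀ e, (Λ e).Unconditional) ∧
        ∀ A : FuzzyAlgebra H S, V A ↔ ∀ e, A.IsModel (Λ e)) ∧
    ((ClosedUnderSplitEpi V ∧ ClosedUnderProd V ∧ ClosedUnderStrongSub V) ↔
      ∃ (ι : Type (u + 1)) (Xe : ι → Type u) (Λ : ∀ e : ι, Theory H S (Xe e)),
        (∀ e, (Λ e).TypeE) ∧
        ∀ A : FuzzyAlgebra H S, V A ↔ ∀ e, A.IsModel (Λ e)) := by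
  constructor
  · constructor
    · rintro ⟨hepi, hprod, hsub⟩
      refine ⟨FuzzyAlgebra H S, fun e => e.carrier,
        fun e => {p | p.1 = ∅ ∧ ∀ B, V B → ∀ κ, B.Sat κ p.2},
        fun e p hp => hp.1, fun A => ?_⟩
      constructor
      · intro hVA e p hp κ _
        exact hp.2 A hVA κ
      · intro hm
        have hsat : ∀ φ : Formula H S A.carrier,
            (∀ B ι, GoodAssign V (fun _ => (⊥ : H)) B ι → B.Sat ι φ) → A.Sat id φ := by
          intro φ hv
          exact hm A ((∅ : Set _), φ)
            ⟨rfl, fun B hB κ => hv B κ ⟨hB, fun _ => bot_le⟩⟩ id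
            (fun ψ hψ => absurd hψ (Set.notMem_empty ψ))
        obtain ⟨F, ev, sec, hVF, _, _, hsurj⟩ :=
          hsp_key V hprod hsub A (fun _ => (⊥ : H)) hsat
        exact hepi F A ev hsurj hVF
    · rintro ⟨ι, Xe, Λ, hU, hiff⟩
      refine ⟨?_, ?_, ?_⟩
      · intro A B h hs hVA
        rw [hiff]
        intro e
        exact isModel_epi h hs (Λ e) (hU e) ((hiff A).mp hVA e)
      · intro I Al hAl
        rw [hiff]
        intro e
        exact isModel_prod_typeE Al (Λ e) (typeE_of_unconditional (hU e))
          (fun i => (hiff (Al i)).mp (hAl i) e)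
      · intro A B h inj hμ hVB
        rw [hiff]
        intro e
        exact isModel_of_strongMono h inj hμ (Λ e) ((hiff B).mp hVB e)
  · constructor
    · rintro ⟨hsplit, hprod, hsub⟩
      refine ⟨FuzzyAlgebra H S, fun e => e.carrier,
        fun e => {p | p.1 = {ψ | ∃ x, ψ = Formula.mem (e.μ x) (Term.var x)} ∧
          ∀ B, V B → ∀ κ, (∀ x, e.μ x ≤ B.μ (κ x)) → B.Sat κ p.2},
        ?_, fun A => ?_⟩
      · intro e p hp ψ hψ
        rw [hp.1] at hψ
        obtain ⟨x, rfl⟩ := hψ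
        exact ⟨e.μ x, x, rfl⟩
      constructor
      · intro hVA e p hp κ hΓ
        refine hp.2 A hVA κ fun x => ?_
        have hx : Formula.mem (e.μ x) (Term.var x) ∈ p.1 := by
          rw [hp.1]; exact ⟨x, rfl⟩
        exact hΓ _ hx
      · intro hm
        have hsat : ∀ φ : Formula H S A.carrier,
            (∀ B ι, GoodAssign V A.μ B ι → B.Sat ι φ) → A.Sat id φ := by
          intro φ hv
          refine hm A ({ψ | ∃ x, ψ = Formula.mem (A.μ x) (Term.var x)}, φ)
            ⟨rfl, fun B hB κ hκ => hv B κ ⟨hB, hκ⟩⟩ id (fun ψ hψ => ?_)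
          obtain ⟨x, rfl⟩ := hψ
          exact le_refl (A.μ x)
        obtain ⟨F, ev, sec, hVF, hevsec, hsecμ, _⟩ :=
          hsp_key V hprod hsub A A.μ hsat
        exact hsplit F A ev ⟨sec, hsecμ, hevsec⟩ hVF
    · rintro ⟨ι, Xe, Λ, hE, hiff⟩
      refine ⟨?_, ?_, ?_⟩
      · intro A B h hs hVA
        rw [hiff]
        intro e
        obtain ⟨sec, hμ, hsec⟩ := hs
        exact isModel_splitEpi h sec hμ hsec (Λ e) (hE e) ((hiff A).mp hVA e)
      · intro I Al hAl
        rw [hiff]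
        intro e
        exact isModel_prod_typeE Al (Λ e) (hE e) (fun i => (hiff (Al i)).mp (hAl i) e)
      · intro A B h inj hμ hVB
        rw [hiff]
        intro e
        exact isModel_of_strongMono h inj hμ (Λ e) ((hiff B).mp hVB e)
end
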